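/- Let A be a real d×n matrix, b ∈ ℝ^d, P a real m×n matrix, f : ℝ → ℝ convex and three times differentiable, ε > 0, R > 0, τ > 0, and w ∈ ℝ^m with Φ(w) > 0. Let r_i = R^{−2}(f''(w_i) + ε·Φ(w)/m), suppose there exists x* with A x* = b and ‖P x*‖_∞ ≤ R, and let Δ̃ attain the minimum of ∑_i r_i (PΔ)_i² over {Δ : AΔ = b}. Let I be a nonempty subset of { i : |(PΔ̃)_i| ≥ R·τ }, and define r' by r'_i = (1+ε)·r_i for i ∈ I and r'_i = r_i otherwise. Then Ψ(r') ≥ Ψ(r)·(1 + ε²τ²/((1+ε)²·m)), where Ψ(s) = inf{ ∑_i s_i (PΔ)_i² : AΔ = b }. -/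

import Mathlib

open scoped BigOperators


lemma mono_deriv_nonneg {g : ℝ → ℝ} (hg : Monotone g) (hd : Differentiable ℝ g) (x : ℝ) :
    0 ≤ deriv g x := by
  have h := hasDerivAt_iff_tendsto_slope.1 (hd x).hasDerivAt
  refine ge_of_tendsto h ?_
  filter_upwards [eventually_mem_nhdsWithin] with y hy
  rcases lt_or_gt_of_ne (Set.mem_compl_singleton_iff.1 hy) with h1 | h1
  · simp only [slope_def_field, div_nonneg_iff]
    right
    exact ⟨by linarith [hg h1.le], by linarith⟩
  · simp only [slope_def_field, div_nonneg_iff]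
    left
    exact ⟨by linarith [hg h1.le], by linarith⟩

set_option maxHeartbeats 800000 in
/-- Lemma 3.1, single width-reduction step, resistances increased by (1+ε):
Ψ(r') ≥ Ψ(r)·(1 + ε²τ²/((1+ε)²·m)). -/
theorem psi_increase_width_step
    (d n m : ℕ) (A : Matrix (Fin d) (Fin n) ℝ) (b : Fin d → ℝ)
    (P : Matrix (Fin m) (Fin n) ℝ) (f : ℝ → ℝ)
    (hconv : ConvexOn ℝ Set.univ f)
    (hf1 : Differentiable ℝ f) (hf2 : Differentiable ℝ (deriv f))
    (hf3 : Differentiable ℝ (deriv (deriv f)))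
    (ε R τ : ℝ) (hε : 0 < ε) (hR : 0 < R) (hτ : 0 < τ)
    (w : Fin m → ℝ) (hΦ : 0 < ∑ j, deriv (deriv f) (w j))
    (r : Fin m → ℝ)
    (hr : ∀ i, r i = 1 / R ^ 2 *
      (deriv (deriv f) (w i) + ε * (∑ j, deriv (deriv f) (w j)) / m))
    (xstar : Fin n → ℝ) (hxA : A.mulVec xstar = b)
    (hxR : ‖P.mulVec xstar‖ ≤ R)
    (Δt : Fin n → ℝ) (hΔA : A.mulVec Δt = b)
    (hΔmin : ∀ Δ : Fin n → ℝ, A.mulVec Δ = b →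
      (∑ i, r i * (P.mulVec Δt) i ^ 2) ≤ ∑ i, r i * (P.mulVec Δ) i ^ 2)
    (I : Finset (Fin m)) (hIne : I.Nonempty)
    (hIwidth : ∀ i ∈ I, R * τ ≤ |(P.mulVec Δt) i|)
    (r' : Fin m → ℝ)
    (hr'I : ∀ i ∈ I, r' i = (1 + ε) * r i)
    (hr'nI : ∀ i ∉ I, r' i = r i) :
    sInf {v : ℝ | ∃ Δ : Fin n → ℝ, A.mulVec Δ = b ∧
        v = ∑ i, r' i * (P.mulVec Δ) i ^ 2} ≥
      sInf {v : ℝ | ∃ Δ : Fin n → ℝ, A.mulVec Δ = b ∧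
        v = ∑ i, r i * (P.mulVec Δ) i ^ 2} *
      (1 + ε ^ 2 * τ ^ 2 / ((1 + ε) ^ 2 * m)) := by
  obtain ⟨i₀, hi₀⟩ := hIne
  set Φ : ℝ := ∑ j, deriv (deriv f) (w j) with hΦdef
  clear_value Φ
  have hm : 0 < (m : ℝ) := by
    have : (0 : ℕ) < m := i₀.pos
    exact_mod_cast this
  have hm0 : (m : ℝ) ≠ 0 := ne_of_gt hm
  have h1ε : (1 : ℝ) + ε ≠ 0 := by positivity
  -- f'' ≥ 0
  have hf'' : ∀ x : ℝ, 0 ≤ deriv (deriv f) x := by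
    have hmono : Monotone (deriv f) := by
      have := hconv.monotoneOn_deriv (fun x _ => hf1 x)
      exact monotoneOn_univ.1 this
    exact mono_deriv_nonneg hmono hf2
  have hα : 0 < ε * Φ / m / R ^ 2 :=
    div_pos (div_pos (mul_pos hε hΦ) hm) (pow_pos hR 2)
  have hrlow : ∀ i, ε * Φ / m / R ^ 2 ≤ r i := by
    intro i
    have heq : ε * Φ / ↑m / R ^ 2 = 1 / R ^ 2 * (ε * Φ / ↑m) := by ring
    rw [hr i, heq]
    have h2 := hf'' (w i)
    have hR2 : (0:ℝ) ≤ 1 / R ^ 2 := by positivity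
    nlinarith
  have hrpos : ∀ i, 0 < r i := fun i => lt_of_lt_of_le hα (hrlow i)
  set v := P.mulVec Δt with hv
  clear_value v
  set E : ℝ := ∑ i, r i * v i ^ 2 with hE
  clear_value E
  have hE0 : 0 ≤ E := by
    rw [hE]
    exact Finset.sum_nonneg fun i _ => mul_nonneg (hrpos i).le (sq_nonneg _)
  -- upper bound on E
  have hEub : E ≤ (1 + ε) * Φ := by
    have h1 : E ≤ ∑ i, r i * (P.mulVec xstar) i ^ 2 := hΔmin xstar hxA
    have h2 : ∑ i, r i * (P.mulVec xstar) i ^ 2 ≤ ∑ i, r i * R ^ 2 := by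
      refine Finset.sum_le_sum fun i _ => ?_
      have hb : |(P.mulVec xstar) i| ≤ R :=
        le_trans (by simpa using norm_le_pi_norm (P.mulVec xstar) i) hxR
      have hsq : (P.mulVec xstar) i ^ 2 ≤ R ^ 2 := by
        nlinarith [abs_nonneg ((P.mulVec xstar) i), sq_abs ((P.mulVec xstar) i)]
      nlinarith [le_of_lt (hrpos i), sq_nonneg ((P.mulVec xstar) i)]
    have h3 : ∑ i, r i * R ^ 2 = (1 + ε) * Φ := by
      have heach : ∀ i, r i * R ^ 2 = deriv (deriv f) (w i) + ε * Φ / m := by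
        intro i; rw [hr i]; field_simp
      rw [Finset.sum_congr rfl fun i _ => heach i, Finset.sum_add_distrib,
        ← hΦdef, Finset.sum_const, Finset.card_univ, Fintype.card_fin, nsmul_eq_mul]
      field_simp
    linarith
  -- lower bound on the i₀ term of E
  have ha2 : ε * τ ^ 2 / ((1 + ε) * m) * E ≤ r i₀ * v i₀ ^ 2 := by
    have hw : R * τ ≤ |v i₀| := hIwidth i₀ hi₀
    have hv2 : R ^ 2 * τ ^ 2 ≤ v i₀ ^ 2 := by
      nlinarith [abs_nonneg (v i₀), sq_abs (v i₀), mul_pos hR hτ]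
    have h1 : ε * Φ / m / R ^ 2 * (R ^ 2 * τ ^ 2) ≤ r i₀ * v i₀ ^ 2 :=
      mul_le_mul (hrlow i₀) hv2 (by positivity) (hrpos i₀).le
    have h2 : ε * Φ / ↑m / R ^ 2 * (R ^ 2 * τ ^ 2) = ε * τ ^ 2 * Φ / m := by
      field_simp
    have h3 : ε * τ ^ 2 / ((1 + ε) * m) * E ≤ ε * τ ^ 2 * Φ / m := by
      rw [div_mul_eq_mul_div, div_le_div_iff₀ (by positivity) hm]
      have h4 : ε * τ ^ 2 * E ≤ ε * τ ^ 2 * ((1 + ε) * Φ) :=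
        mul_le_mul_of_nonneg_left hEub (by positivity)
      nlinarith
    linarith
  -- key bound for every feasible Δ
  have key : ∀ Δ : Fin n → ℝ, A.mulVec Δ = b →
      E * (1 + ε ^ 2 * τ ^ 2 / ((1 + ε) ^ 2 * m)) ≤ ∑ i, r' i * (P.mulVec Δ) i ^ 2 := by
    intro Δ hΔ
    set u := P.mulVec Δ with hu
    clear_value u
    set c : ℝ := ∑ i, r i * v i * (u i - v i) with hc
    set q : ℝ := ∑ i, r i * (u i - v i) ^ 2 with hq
    clear_value c q
    have hq0 : 0 ≤ q := by
      rw [hq]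
      exact Finset.sum_nonneg fun i _ => mul_nonneg (hrpos i).le (sq_nonneg _)
    have hfeas : ∀ t : ℝ, A.mulVec (fun j => Δt j + t * (Δ j - Δt j)) = b := by
      intro t
      have heq : (fun j => Δt j + t * (Δ j - Δt j)) = Δt + t • (Δ - Δt) := by
        funext j
        simp only [Pi.add_apply, Pi.smul_apply, Pi.sub_apply, smul_eq_mul]
      rw [heq, Matrix.mulVec_add, Matrix.mulVec_smul, Matrix.mulVec_sub, hΔA, hΔ]
      simp
    have hquad : ∀ t : ℝ, 0 ≤ 2 * t * c + t ^ 2 * q := by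
      intro t
      have h1 := hΔmin _ (hfeas t)
      have hP : ∀ i, (P.mulVec (fun j => Δt j + t * (Δ j - Δt j))) i
          = v i + t * (u i - v i) := by
        intro i
        have heq : (fun j => Δt j + t * (Δ j - Δt j)) = Δt + t • (Δ - Δt) := by
          funext j
          simp only [Pi.add_apply, Pi.smul_apply, Pi.sub_apply, smul_eq_mul]
        rw [heq, Matrix.mulVec_add, Matrix.mulVec_smul, Matrix.mulVec_sub]
        simp [hu, hv]
      have h2 : ∑ i, r i * (P.mulVec (fun j => Δt j + t * (Δ j - Δt j))) i ^ 2
          = E + 2 * t * c + t ^ 2 * q := by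
        rw [Finset.sum_congr rfl fun i _ => by rw [hP i]]
        rw [hE, hc, hq, Finset.mul_sum, Finset.mul_sum, ← Finset.sum_add_distrib,
          ← Finset.sum_add_distrib]
        exact Finset.sum_congr rfl fun i _ => by ring
      rw [h2] at h1
      linarith
    have hc0 : c = 0 := by
      have hq1 : (0:ℝ) < q + 1 := by linarith
      have hne : q + 1 ≠ 0 := ne_of_gt hq1
      have h := hquad (-c / (q + 1))
      have heq : 2 * (-c / (q + 1)) * c + (-c / (q + 1)) ^ 2 * q
          = (c ^ 2 * q - 2 * c ^ 2 * (q + 1)) / (q + 1) ^ 2 := by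
        field_simp
        ring
      rw [heq, le_div_iff₀ (by positivity)] at h
      have hle : c ^ 2 ≤ 0 := by nlinarith
      have : c ^ 2 = 0 := le_antisymm hle (sq_nonneg c)
      exact (pow_eq_zero_iff two_ne_zero).mp this
    have hdecomp : ∑ i, r i * u i ^ 2 = E + q := by
      have h : ∑ i, r i * u i ^ 2 = E + 2 * c + q := by
        rw [hE, hc, hq, Finset.mul_sum, ← Finset.sum_add_distrib, ← Finset.sum_add_distrib]
        exact Finset.sum_congr rfl fun i _ => by ring
      rw [h, hc0]; ring
    set T : ℝ := ∑ i ∈ I, r i * u i ^ 2 with hT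
    clear_value T
    have hr'sum : ∑ i, r' i * u i ^ 2 = ∑ i, r i * u i ^ 2 + ε * T := by
      have h1 : ∀ i, r' i * u i ^ 2
          = r i * u i ^ 2 + (if i ∈ I then ε * (r i * u i ^ 2) else 0) := by
        intro i
        by_cases hi : i ∈ I
        · rw [hr'I i hi]; simp only [if_pos hi]; ring
        · rw [hr'nI i hi]; simp only [if_neg hi]; ring
      rw [Finset.sum_congr rfl fun i _ => h1 i, Finset.sum_add_distrib]
      congr 1
      rw [Finset.sum_ite_mem, Finset.univ_inter, ← Finset.mul_sum, hT]
    have hq_lb : r i₀ * (u i₀ - v i₀) ^ 2 ≤ q := by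
      rw [hq]
      exact Finset.single_le_sum (f := fun i => r i * (u i - v i) ^ 2)
        (fun i _ => mul_nonneg (hrpos i).le (sq_nonneg _)) (Finset.mem_univ i₀)
    have hT_lb : r i₀ * u i₀ ^ 2 ≤ T := by
      rw [hT]
      exact Finset.single_le_sum
        (fun i (_ : i ∈ I) => mul_nonneg (hrpos i).le (sq_nonneg _)) hi₀
    have hkey : ε / (1 + ε) * (r i₀ * v i₀ ^ 2)
        ≤ r i₀ * (u i₀ - v i₀) ^ 2 + ε * (r i₀ * u i₀ ^ 2) := by
      rw [div_mul_eq_mul_div, div_le_iff₀ (by linarith)]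
      nlinarith [mul_nonneg (hrpos i₀).le (sq_nonneg ((1 + ε) * u i₀ - v i₀))]
    have hfinal : ε / (1 + ε) * (ε * τ ^ 2 / ((1 + ε) * m) * E)
        = E * (ε ^ 2 * τ ^ 2 / ((1 + ε) ^ 2 * m)) := by
      field_simp
    have h5 : ε / (1 + ε) * (ε * τ ^ 2 / ((1 + ε) * m) * E)
        ≤ ε / (1 + ε) * (r i₀ * v i₀ ^ 2) :=
      mul_le_mul_of_nonneg_left ha2 (by positivity)
    have hεT : ε * (r i₀ * u i₀ ^ 2) ≤ ε * T :=
      mul_le_mul_of_nonneg_left hT_lb hε.le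
    calc E * (1 + ε ^ 2 * τ ^ 2 / ((1 + ε) ^ 2 * m))
        = E + E * (ε ^ 2 * τ ^ 2 / ((1 + ε) ^ 2 * m)) := by ring
      _ ≤ E + (r i₀ * (u i₀ - v i₀) ^ 2 + ε * (r i₀ * u i₀ ^ 2)) := by
          rw [← hfinal]; linarith
      _ ≤ E + q + ε * T := by linarith
      _ = ∑ i, r' i * u i ^ 2 := by rw [hr'sum, hdecomp]
  have hSinf : sInf {x : ℝ | ∃ Δ : Fin n → ℝ, A.mulVec Δ = b ∧
      x = ∑ i, r i * (P.mulVec Δ) i ^ 2} = E := by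
    apply IsLeast.csInf_eq
    constructor
    · exact ⟨Δt, hΔA, by rw [hE, hv]⟩
    · rintro x ⟨Δ, hΔ, rfl⟩
      exact hΔmin Δ hΔ
  rw [ge_iff_le, hSinf]
  apply le_csInf
  · exact ⟨∑ i, r' i * (P.mulVec Δt) i ^ 2, Δt, hΔA, rfl⟩
  · rintro x ⟨Δ, hΔ, rfl⟩
    exact key Δ hΔ
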